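/- arXiv:1312.1617 — 5 statements merged into one kernel-verified Lean document; each statement's English description precedes it below -/
import Mathlib

section
/- Let d ≥ 2 be an integer and let λ be a real number with λ > 0. Then for every real x ≥ 1 one has (x+λ-1)^d - (x-1)^d > 0 (so the real map U_{dλ}(x) = ((x+λ-1)^d + (λ-1)(x-1)^d)^d / ((x+λ-1)^d - (x-1)^d)^d is well defined on [1,∞)), U_{dλ}(1) = 1, and U_{dλ} is strictly increasing on the interval [1,∞). -/
/-- The real renormalization transformation
`U_{dλ}(x) = ((x+λ-1)^d + (λ-1)(x-1)^d)^d / ((x+λ-1)^d - (x-1)^d)^d`. -/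
noncomputable def Ur (d : ℕ) (l : ℝ) (x : ℝ) : ℝ :=
  ((x + l - 1) ^ d + (l - 1) * (x - 1) ^ d) ^ d / ((x + l - 1) ^ d - (x - 1) ^ d) ^ d

/-- for `d ≥ 2` and real `λ > 0`, the denominator `(x+λ-1)^d - (x-1)^d` is
positive for all `x ≥ 1`, `U_{dλ}(1) = 1`, and `U_{dλ}` is strictly increasing on `[1,∞)`. -/
theorem Ur_strictMonoOn (d : ℕ) (hd : 2 ≤ d) (l : ℝ) (hl : 0 < l) :
    (∀ x : ℝ, 1 ≤ x → 0 < (x + l - 1) ^ d - (x - 1) ^ d) ∧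
    Ur d l 1 = 1 ∧
    StrictMonoOn (Ur d l) (Set.Ici 1) := by
  have hd0 : d ≠ 0 := by omega
  have hden : ∀ x : ℝ, 1 ≤ x → 0 < (x + l - 1) ^ d - (x - 1) ^ d := by
    intro x hx
    have h1 : (0:ℝ) ≤ x - 1 := by linarith
    have h2 : x - 1 < x + l - 1 := by linarith
    have := pow_lt_pow_left₀ h2 h1 hd0
    linarith
  have hUr : ∀ x : ℝ, 1 ≤ x →
      Ur d l x = (1 + l * (x - 1) ^ d / ((x + l - 1) ^ d - (x - 1) ^ d)) ^ d := by
    intro x hx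
    have hD := hden x hx
    rw [Ur, ← div_pow]
    congr 1
    field_simp
    ring
  refine ⟨hden, ?_, ?_⟩
  · rw [hUr 1 le_rfl]
    simp [zero_pow hd0]
  · intro x hx y hy hxy
    simp only [Set.mem_Ici] at hx hy
    rw [hUr x hx, hUr y hy]
    have hDx := hden x hx
    have hDy := hden y hy
    have hx1 : (0:ℝ) ≤ x - 1 := by linarith
    have key : (x - 1) * (y + l - 1) < (y - 1) * (x + l - 1) := by nlinarith
    have key0 : (0:ℝ) ≤ (x - 1) * (y + l - 1) := by nlinarith
    have hp : ((x - 1) * (y + l - 1)) ^ d < ((y - 1) * (x + l - 1)) ^ d :=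
      pow_lt_pow_left₀ key key0 hd0
    have hfrac : l * (x - 1) ^ d / ((x + l - 1) ^ d - (x - 1) ^ d)
        < l * (y - 1) ^ d / ((y + l - 1) ^ d - (y - 1) ^ d) := by
      rw [div_lt_div_iff₀ hDx hDy]
      have h := mul_lt_mul_of_pos_left hp hl
      rw [mul_pow, mul_pow] at h
      nlinarith
    have h0 : 0 ≤ 1 + l * (x - 1) ^ d / ((x + l - 1) ^ d - (x - 1) ^ d) := by
      have : 0 ≤ l * (x - 1) ^ d / ((x + l - 1) ^ d - (x - 1) ^ d) :=
        div_nonneg (by positivity) hDx.le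
      linarith
    exact pow_lt_pow_left₀ (by linarith) h0 hd0
end

section
/- Let d ≥ 2 be an integer and let λ be a real number with λ > 0. Then the real map U_{dλ}(x) = ((x+λ-1)^d + (λ-1)(x-1)^d)^d / ((x+λ-1)^d - (x-1)^d)^d has at least one fixed point in the open interval (1,+∞): there exists a real x > 1 with U_{dλ}(x) = x. -/
lemma aux_pow_sub (a b : ℝ) (hb : 0 ≤ b) (hba : b ≤ a) :
    ∀ n : ℕ, a ^ (n + 1) - b ^ (n + 1) ≤ ((n : ℝ) + 1) * a ^ n * (a - b) := by
  intro n
  induction n with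
  | zero => simp
  | succ n ih =>
    have ha : 0 ≤ a := hb.trans hba
    have h2 : (a - b) * b ^ (n + 1) ≤ (a - b) * a ^ (n + 1) :=
      mul_le_mul_of_nonneg_left (pow_le_pow_left₀ hb hba _) (by linarith)
    have h3 : a * (a ^ (n + 1) - b ^ (n + 1)) ≤ a * (((n : ℝ) + 1) * a ^ n * (a - b)) :=
      mul_le_mul_of_nonneg_left ih ha
    have key : a ^ (n + 2) - b ^ (n + 2) =
        a * (a ^ (n + 1) - b ^ (n + 1)) + (a - b) * b ^ (n + 1) := by ring
    have h4 : a * (((n : ℝ) + 1) * a ^ n * (a - b)) = ((n : ℝ) + 1) * a ^ (n + 1) * (a - b) := by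
      ring
    push_cast
    linarith [h2, h3, key, h4]

lemma aux_add_pow_ge (s l : ℝ) (hs : 0 ≤ s) (hl : 0 ≤ l) :
    ∀ n : ℕ, l ^ (n + 1) + s ^ (n + 1) ≤ (s + l) ^ (n + 1) := by
  intro n
  induction n with
  | zero => simp only [zero_add, pow_one]; linarith
  | succ n ih =>
    have h1 : (s + l) ^ (n + 1 + 1) = (s + l) * (s + l) ^ (n + 1) := by ring
    have h2 : (s + l) * (l ^ (n + 1) + s ^ (n + 1)) ≤ (s + l) * (s + l) ^ (n + 1) :=
      mul_le_mul_of_nonneg_left ih (by linarith)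
    have h3 : (s + l) * (l ^ (n + 1) + s ^ (n + 1)) =
        s * l ^ (n + 1) + l * s ^ (n + 1) + l ^ (n + 1 + 1) + s ^ (n + 1 + 1) := by ring
    have h4 : 0 ≤ s * l ^ (n + 1) := mul_nonneg hs (pow_nonneg hl _)
    have h5 : 0 ≤ l * s ^ (n + 1) := mul_nonneg hl (pow_nonneg hs _)
    linarith

lemma aux_one_add_pow_le' (u : ℝ) (hu0 : 0 ≤ u) (hu1 : u ≤ 1) :
    ∀ n : ℕ, (1 + u) ^ n ≤ 1 + (2 ^ n - 1) * u := by
  intro n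
  induction n with
  | zero => simp
  | succ n ih =>
    have h1 : (1 + u) ^ (n + 1) = (1 + u) ^ n * (1 + u) := by ring
    have h2 : (1 + u) ^ n * (1 + u) ≤ (1 + (2 ^ n - 1) * u) * (1 + u) :=
      mul_le_mul_of_nonneg_right ih (by linarith)
    have h3 : (1:ℝ) ≤ 2 ^ n := one_le_pow₀ (by norm_num)
    have h4 : (1 + ((2:ℝ) ^ n - 1) * u) * (1 + u) =
        1 + (2 ^ n) * u + (2 ^ n - 1) * (u * u) - (2 ^ n - 1) * u * u + (2 ^ n - 1) * u * u := by
      ring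
    have h5 : ((2:ℝ) ^ n - 1) * (u * u) ≤ (2 ^ n - 1) * u :=
      mul_le_mul_of_nonneg_left (by nlinarith) (by linarith)
    have h6 : (2:ℝ) ^ (n + 1) = 2 ^ n + 2 ^ n := by ring
    nlinarith

lemma aux_one_add_pow_le (u : ℝ) (hu0 : 0 ≤ u) (hu1 : u ≤ 1) :
    ∀ n : ℕ, (1 + u) ^ n ≤ 1 + 2 ^ n * u := by
  intro n
  have h := aux_one_add_pow_le' u hu0 hu1 n
  nlinarith

/-- for `d ≥ 2` and real `λ > 0`, the map `U_{dλ}` has at least one fixed point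
in the open interval `(1,+∞)`. -/
theorem Ur_exists_fixed_point (d : ℕ) (hd : 2 ≤ d) (l : ℝ) (hl : 0 < l) :
    ∃ x : ℝ, 1 < x ∧ Ur d l x = x := by
  obtain ⟨m, rfl⟩ : ∃ m, d = m + 2 := ⟨d - 2, by omega⟩
  set c : ℝ := l ^ (m + 1) with hc
  have hc0 : 0 < c := by positivity
  -- the small point
  set s : ℝ := min 1 (c / 2 ^ (m + 3)) with hsdef
  have hs0 : 0 < s := lt_min one_pos (by positivity)
  have hs1 : s ≤ 1 := min_le_left _ _
  have hs2 : s ≤ c / 2 ^ (m + 3) := min_le_right _ _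
  -- the big point
  set K : ℝ := ((m : ℝ) + 2) * 2 ^ (m + 1) with hK
  have hK1 : 1 ≤ K := by
    have h1 : (1:ℝ) ≤ 2 ^ (m + 1) := one_le_pow₀ (by norm_num)
    nlinarith [Nat.cast_nonneg (α := ℝ) m]
  set t : ℝ := max (max 1 l) (2 * K ^ 2) with ht
  have ht1 : 1 ≤ t := le_trans (le_max_left 1 l) (le_max_left _ _)
  have htl : l ≤ t := le_trans (le_max_right 1 l) (le_max_left _ _)
  have htK2 : 2 * K ^ 2 ≤ t := le_max_right _ _
  have htK : K ≤ t := by nlinarith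
  have ht0 : 0 < t := lt_of_lt_of_le one_pos ht1
  -- general facts about the denominator
  have Dlb : ∀ x : ℝ, 1 ≤ x → l ^ (m + 2) ≤ (x + l - 1) ^ (m + 2) - (x - 1) ^ (m + 2) := by
    intro x hx
    have := aux_add_pow_ge (x - 1) l (by linarith) hl.le (m + 1)
    have hxl : x + l - 1 = (x - 1) + l := by ring
    rw [hxl]
    linarith
  have Dpos : ∀ x : ℝ, 1 ≤ x → 0 < (x + l - 1) ^ (m + 2) - (x - 1) ^ (m + 2) := by
    intro x hx
    have := Dlb x hx
    have : (0:ℝ) < l ^ (m + 2) := by positivity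
    linarith [Dlb x hx]
  -- rewrite Ur as a single power
  have hUr : ∀ x : ℝ,
      Ur (m + 2) l x = (((x + l - 1) ^ (m + 2) + (l - 1) * (x - 1) ^ (m + 2)) /
        ((x + l - 1) ^ (m + 2) - (x - 1) ^ (m + 2))) ^ (m + 2) := by
    intro x
    rw [Ur, div_pow]
  -- the small point: Ur (1+s) < 1+s
  have hsmall : Ur (m + 2) l (1 + s) < 1 + s := by
    have h1 : (1 + s) + l - 1 = s + l := by ring
    have h2 : (1 + s) - 1 = s := by ring
    set D : ℝ := (s + l) ^ (m + 2) - s ^ (m + 2) with hD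
    set N : ℝ := (s + l) ^ (m + 2) + (l - 1) * s ^ (m + 2) with hN
    have hDl : l ^ (m + 2) ≤ D := by
      have := Dlb (1 + s) (by linarith)
      rw [h1, h2] at this; exact this
    have hDpos : 0 < D := lt_of_lt_of_le (by positivity) hDl
    have hNeq : N = D + l * s ^ (m + 2) := by rw [hN, hD]; ring
    set u : ℝ := s ^ (m + 2) / c with hu
    have hu0 : 0 ≤ u := by positivity
    have hsm2 : s ^ (m + 2) ≤ s ^ 1 := pow_le_pow_of_le_one hs0.le hs1 (by omega)
    have hsm2' : s ^ (m + 2) ≤ s * s := by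
      calc s ^ (m + 2) ≤ s ^ 2 := pow_le_pow_of_le_one hs0.le hs1 (by omega)
        _ = s * s := sq s
    have hu1 : u ≤ 1 := by
      rw [hu, div_le_one hc0]
      calc s ^ (m + 2) ≤ s ^ 1 := hsm2
        _ = s := pow_one s
        _ ≤ c / 2 ^ (m + 3) := hs2
        _ ≤ c := div_le_self hc0.le (one_le_pow₀ (by norm_num))
    have hND : N / D ≤ 1 + u := by
      rw [div_le_iff₀ hDpos]
      have huD : u * l ^ (m + 2) ≤ u * D := mul_le_mul_of_nonneg_left hDl hu0
      have hcalc : u * l ^ (m + 2) = l * s ^ (m + 2) := by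
        rw [hu]
        field_simp
        ring
      nlinarith [huD]
    have hND0 : 0 ≤ N / D := by
      apply div_nonneg _ hDpos.le
      rw [hNeq]; positivity
    have hpow : (N / D) ^ (m + 2) ≤ (1 + u) ^ (m + 2) := pow_le_pow_left₀ hND0 hND _
    have hexp : (1 + u) ^ (m + 2) ≤ 1 + 2 ^ (m + 2) * u := aux_one_add_pow_le u hu0 hu1 _
    have hfin : 2 ^ (m + 2) * u ≤ s / 2 := by
      have h5 : u ≤ s * s / c := by
        rw [hu]; gcongr
      have h6 : s / c ≤ 1 / 2 ^ (m + 3) := by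
        have hs2' : s * 2 ^ (m + 3) ≤ c := by
          have := (le_div_iff₀ (show (0:ℝ) < 2 ^ (m + 3) by positivity)).mp hs2
          linarith
        rw [div_le_div_iff₀ hc0 (by positivity)]
        linarith
      have h7 : (2:ℝ) ^ (m + 3) = 2 * 2 ^ (m + 2) := by ring
      have h8 : (0:ℝ) < 2 ^ (m + 2) := by positivity
      calc 2 ^ (m + 2) * u ≤ 2 ^ (m + 2) * (s * s / c) := mul_le_mul_of_nonneg_left h5 h8.le
        _ = 2 ^ (m + 2) * s * (s / c) := by ring
        _ ≤ 2 ^ (m + 2) * s * (1 / 2 ^ (m + 3)) := by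
            apply mul_le_mul_of_nonneg_left h6
            positivity
        _ = s / 2 := by rw [h7]; field_simp
    rw [hUr]
    rw [h1, h2]
    calc (N / D) ^ (m + 2) ≤ 1 + 2 ^ (m + 2) * u := le_trans hpow hexp
      _ ≤ 1 + s / 2 := by linarith
      _ < 1 + s := by linarith
  -- the big point : 1 + t < Ur (1+t)
  have hbig : 1 + t < Ur (m + 2) l (1 + t) := by
    have h1 : (1 + t) + l - 1 = t + l := by ring
    have h2 : (1 + t) - 1 = t := by ring
    set D : ℝ := (t + l) ^ (m + 2) - t ^ (m + 2) with hD
    set N : ℝ := (t + l) ^ (m + 2) + (l - 1) * t ^ (m + 2) with hN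
    have hDl : l ^ (m + 2) ≤ D := by
      have := Dlb (1 + t) (by linarith)
      rw [h1, h2] at this; exact this
    have hDpos : 0 < D := lt_of_lt_of_le (by positivity) hDl
    have hNlb : l * t ^ (m + 2) ≤ N := by
      have : t ^ (m + 2) ≤ (t + l) ^ (m + 2) := pow_le_pow_left₀ ht0.le (by linarith) _
      rw [hN]; nlinarith
    have hDub : D ≤ l * K * t ^ (m + 1) := by
      have h3 : D ≤ ((m : ℝ) + 2) * (t + l) ^ (m + 1) * ((t + l) - t) := by
        have := aux_pow_sub (t + l) t ht0.le (by linarith) (m + 1)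
        rw [hD]
        push_cast at this ⊢
        linarith
      have h4 : (t + l) ^ (m + 1) ≤ (2 * t) ^ (m + 1) := pow_le_pow_left₀ (by linarith) (by linarith) _
      have h5 : ((2:ℝ) * t) ^ (m + 1) = 2 ^ (m + 1) * t ^ (m + 1) := mul_pow 2 t (m + 1)
      have hm2 : (0:ℝ) ≤ (m : ℝ) + 2 := by positivity
      calc D ≤ ((m : ℝ) + 2) * (t + l) ^ (m + 1) * l := by
              rw [show (t + l) - t = l by ring] at h3; exact h3
        _ ≤ ((m : ℝ) + 2) * (2 ^ (m + 1) * t ^ (m + 1)) * l := by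
              apply mul_le_mul_of_nonneg_right _ hl.le
              apply mul_le_mul_of_nonneg_left _ hm2
              rw [← h5]; exact h4
        _ = l * K * t ^ (m + 1) := by rw [hK]; ring
    have hKpos : 0 < K := lt_of_lt_of_le one_pos hK1
    have htK' : t / K ≤ N / D := by
      rw [div_le_div_iff₀ hKpos hDpos]
      have : t * D ≤ t * (l * K * t ^ (m + 1)) := mul_le_mul_of_nonneg_left hDub ht0.le
      have heq : t * (l * K * t ^ (m + 1)) = K * (l * t ^ (m + 2)) := by ring
      have : t * D ≤ K * (l * t ^ (m + 2)) := by linarith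
      have h6 : K * (l * t ^ (m + 2)) ≤ K * N := mul_le_mul_of_nonneg_left hNlb hKpos.le
      linarith
    have htK1 : 1 ≤ t / K := by
      rw [le_div_iff₀ hKpos]; linarith
    have hp1 : (t / K) ^ 2 ≤ (t / K) ^ (m + 2) := pow_le_pow_right₀ htK1 (by omega)
    have hp2 : (t / K) ^ (m + 2) ≤ (N / D) ^ (m + 2) := pow_le_pow_left₀ (by positivity) htK' _
    have hp3 : 2 * t ≤ (t / K) ^ 2 := by
      have hKK : (0:ℝ) < K ^ 2 := by positivity
      rw [div_pow, le_div_iff₀ hKK]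
      have h9 : (2 * K ^ 2) * t ≤ t * t := mul_le_mul_of_nonneg_right htK2 ht0.le
      calc 2 * t * K ^ 2 = (2 * K ^ 2) * t := by ring
        _ ≤ t * t := h9
        _ = t ^ 2 := (sq t).symm
    rw [hUr, h1, h2]
    show 1 + t < (N / D) ^ (m + 2)
    have ht2 : 2 ≤ t := by
      have hh : (1:ℝ) ≤ K ^ 2 := one_le_pow₀ hK1
      linarith
    have : 2 * t ≤ (N / D) ^ (m + 2) := le_trans hp3 (le_trans hp1 hp2)
    linarith
  -- intermediate value theorem
  set f : ℝ → ℝ := fun x => Ur (m + 2) l x - x with hf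
  have hab : 1 + s ≤ 1 + t := by linarith
  have hcont : ContinuousOn f (Set.Icc (1 + s) (1 + t)) := by
    apply ContinuousOn.sub _ continuousOn_id
    apply ContinuousOn.div
    · exact (Continuous.continuousOn (by fun_prop))
    · exact (Continuous.continuousOn (by fun_prop))
    · intro x hx
      have hx1 : 1 ≤ x := le_trans (by linarith) hx.1
      have := Dpos x hx1
      positivity
  have hivt := intermediate_value_Icc hab hcont
  have h0 : (0:ℝ) ∈ Set.Icc (f (1 + s)) (f (1 + t)) := by
    constructor
    · simp only [hf]; linarith
    · simp only [hf]; linarith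
  obtain ⟨x, hx, hfx⟩ := hivt h0
  refine ⟨x, ?_, ?_⟩
  · linarith [hx.1]
  · simp only [hf] at hfx
    linarith
end

section
/- Let d ≥ 2 be an integer and let λ be a real number with λ < 0. Then for every real x ∈ [0,1] one has (x+λ-1)^d - (x-1)^d ≠ 0 (so the real map U_{dλ}(x) = ((x+λ-1)^d + (λ-1)(x-1)^d)^d / ((x+λ-1)^d - (x-1)^d)^d is well defined on [0,1]), U_{dλ} is monotone increasing on [0,1], and 0 < U_{dλ}(0) < 1. -/
lemma Ur_rw (d : ℕ) (l x : ℝ) (hB : ((1-x-l)^d - (1-x)^d : ℝ) ≠ 0) :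
    Ur d l x = (((1-x-l)^d + (l-1)*(1-x)^d) / ((1-x-l)^d - (1-x)^d))^d := by
  unfold Ur
  have ha : (x+l-1)^d = (-1:ℝ)^d * (1-x-l)^d := by
    rw [show x+l-1 = (-1)*(1-x-l) by ring, mul_pow]
  have hb : (x-1)^d = (-1:ℝ)^d * (1-x)^d := by
    rw [show x-1 = (-1)*(1-x) by ring, mul_pow]
  rw [ha, hb]
  have e1 : ((-1:ℝ)^d * (1-x-l)^d + (l-1)*((-1)^d * (1-x)^d))
      = (-1)^d * ((1-x-l)^d + (l-1)*(1-x)^d) := by ring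
  have e2 : ((-1:ℝ)^d * (1-x-l)^d - (-1)^d * (1-x)^d)
      = (-1)^d * ((1-x-l)^d - (1-x)^d) := by ring
  rw [e1, e2, mul_pow, mul_pow,
    mul_div_mul_left _ _ (pow_ne_zero _ (pow_ne_zero _ (by norm_num : (-1:ℝ) ≠ 0))),
    ← div_pow]

/-- for `d ≥ 2` and real `λ < 0`, the denominator `(x+λ-1)^d - (x-1)^d` never
vanishes on `[0,1]`, `U_{dλ}` is monotone increasing on `[0,1]`, and `0 < U_{dλ}(0) < 1`. -/
theorem Ur_monotoneOn_Icc (d : ℕ) (hd : 2 ≤ d) (l : ℝ) (hl : l < 0) :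
    (∀ x ∈ Set.Icc (0 : ℝ) 1, (x + l - 1) ^ d - (x - 1) ^ d ≠ 0) ∧
    MonotoneOn (Ur d l) (Set.Icc 0 1) ∧
    0 < Ur d l 0 ∧ Ur d l 0 < 1 := by
  have hd0 : d ≠ 0 := by omega
  have hc : (1:ℝ) < 1 - l := by linarith
  -- positivity of the (sign-normalized) denominator
  have hB : ∀ x ∈ Set.Icc (0:ℝ) 1, 0 < (1-x-l)^d - (1-x)^d := by
    rintro x ⟨hx0, hx1⟩
    have h1 : (0:ℝ) ≤ 1 - x := by linarith
    have h2 : 1 - x < 1 - x - l := by linarith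
    have := pow_lt_pow_left₀ h2 h1 hd0
    linarith
  -- nonnegativity of the (sign-normalized) numerator
  have hN : ∀ x ∈ Set.Icc (0:ℝ) 1, 0 ≤ (1-x-l)^d + (l-1)*(1-x)^d := by
    rintro x ⟨hx0, hx1⟩
    have h1 : (0:ℝ) ≤ 1 - x := by linarith
    have h2 : (1-l)*(1-x) ≤ 1 - x - l := by nlinarith
    have h3 : ((1-l)*(1-x))^d ≤ (1-x-l)^d :=
      pow_le_pow_left₀ (by positivity) h2 d
    have h4 : (1-l) ≤ (1-l)^d := by
      calc (1-l) = (1-l)^1 := (pow_one _).symm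
        _ ≤ (1-l)^d := pow_le_pow_right₀ (le_of_lt hc) (by omega)
    have h5 : (0:ℝ) ≤ (1-x)^d := pow_nonneg h1 d
    rw [mul_pow] at h3
    nlinarith
  -- the original denominator never vanishes
  have hden : ∀ x ∈ Set.Icc (0:ℝ) 1, (x + l - 1) ^ d - (x - 1) ^ d ≠ 0 := by
    intro x hx
    have e : (x+l-1)^d - (x-1)^d = (-1)^d * ((1-x-l)^d - (1-x)^d) := by
      rw [show x+l-1 = (-1)*(1-x-l) by ring, show x-1 = (-1)*(1-x) by ring,
        mul_pow, mul_pow]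
      ring
    rw [e]
    exact mul_ne_zero (pow_ne_zero _ (by norm_num)) (ne_of_gt (hB x hx))
  refine ⟨hden, ?_, ?_, ?_⟩
  · -- monotonicity
    rintro x hx y hy hxy
    have hBx := hB x hx
    have hBy := hB y hy
    have hNx := hN x hx
    have hNy := hN y hy
    rw [Ur_rw d l x (ne_of_gt hBx), Ur_rw d l y (ne_of_gt hBy)]
    apply pow_le_pow_left₀ (div_nonneg hNx (le_of_lt hBx))
    rw [div_le_div_iff₀ hBx hBy]
    obtain ⟨hx0, hx1⟩ := hx
    obtain ⟨hy0, hy1⟩ := hy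
    have key : ((1-x-l)*(1-y))^d ≤ ((1-y-l)*(1-x))^d := by
      apply pow_le_pow_left₀ (by nlinarith) (by nlinarith)
    rw [mul_pow, mul_pow] at key
    have h := mul_nonneg (show (0:ℝ) ≤ -l by linarith) (sub_nonneg.mpr key)
    nlinarith [h]
  · -- 0 < Ur d l 0
    have h0 : (0:ℝ) ∈ Set.Icc (0:ℝ) 1 := by constructor <;> norm_num
    rw [Ur_rw d l 0 (ne_of_gt (hB 0 h0))]
    have hN0 : 0 < (1-(0:ℝ)-l)^d + (l-1)*(1-(0:ℝ))^d := by
      have h4 : (1-l) < (1-l)^d := by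
        calc (1-l) = (1-l)^1 := (pow_one _).symm
          _ < (1-l)^d := pow_lt_pow_right₀ hc (by omega)
      simp only [sub_zero, one_pow, mul_one]
      linarith
    exact pow_pos (div_pos hN0 (hB 0 h0)) d
  · -- Ur d l 0 < 1
    have h0 : (0:ℝ) ∈ Set.Icc (0:ℝ) 1 := by constructor <;> norm_num
    rw [Ur_rw d l 0 (ne_of_gt (hB 0 h0))]
    have hB0 := hB 0 h0
    apply pow_lt_one₀ (div_nonneg (hN 0 h0) (le_of_lt hB0)) _ hd0
    rw [div_lt_one hB0]
    simp only [sub_zero, one_pow, mul_one]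
    linarith
end

section
/- Let d ≥ 2 be an integer and q = -d. Then for all natural numbers m₁, m₂ and every integer n ≥ 1, the integer q^n - 1 does not divide q^{m₁} + q^{m₂}; in congruence form, q^{m₁} + q^{m₂} ≢ 0 (mod q^n - 1). -/
lemma keyC_aux (d q : ℤ) (hd : 2 ≤ d) (hq : q = -d) (n c : ℕ) (hc1 : 1 ≤ c) (hcn : c < n)
    (h : q ^ n - 1 ∣ q ^ c + 1) : False := by
  have hd0 : (0:ℤ) ≤ d := by linarith
  have habs : ∀ k : ℕ, |q ^ k| = d ^ k := by
    intro k
    rw [hq, abs_pow, abs_neg, abs_of_nonneg hd0]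
  have hDabs : d ^ n - 1 ≤ |q ^ n - 1| := by
    have h1 := abs_sub_abs_le_abs_sub (q ^ n) 1
    rw [habs] at h1
    simpa using h1
  have hdcn : d ^ c * d ≤ d ^ n := by
    calc d ^ c * d = d ^ (c + 1) := by rw [pow_succ]
    _ ≤ d ^ n := pow_le_pow_right₀ (by linarith) hcn
  have hdc1 : (1:ℤ) ≤ d ^ c := one_le_pow₀ (by linarith)
  have hcltn : d ^ c + 1 ≤ d ^ n := by
    have h2 := mul_le_mul_of_nonneg_left hd (show (0:ℤ) ≤ d ^ c by linarith)
    linarith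
  have hlt : |q ^ c + 1| < |q ^ n - 1| ∧ q ^ c + 1 ≠ 0 := by
    rcases Nat.even_or_odd c with hc | hc
    · have e : q ^ c = d ^ c := by rw [hq]; exact hc.neg_pow d
      rcases Nat.even_or_odd n with hne | hno
      · -- n even, c even : c + 2 ≤ n
        obtain ⟨i, hi⟩ := hc
        obtain ⟨j, hj⟩ := hne
        have hc2 : c + 2 ≤ n := by omega
        have h2 : d ^ c * d ^ 2 ≤ d ^ n := by
          calc d ^ c * d ^ 2 = d ^ (c + 2) := by rw [pow_add]
          _ ≤ d ^ n := pow_le_pow_right₀ (by linarith) hc2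
        have hd2 : (4:ℤ) ≤ d ^ 2 := by nlinarith
        have h4 : 4 * d ^ c ≤ d ^ n := by
          have := mul_le_mul_of_nonneg_left hd2 (show (0:ℤ) ≤ d ^ c by linarith)
          linarith
        constructor
        · rw [e, abs_of_pos (by linarith)]
          linarith
        · rw [e]; intro hcon; linarith
      · -- n odd : |q^n - 1| = d^n + 1
        have en : q ^ n = -(d ^ n) := by rw [hq]; exact hno.neg_pow d
        have hD : |q ^ n - 1| = d ^ n + 1 := by
          rw [en]
          rw [show -(d ^ n) - 1 = -(d ^ n + 1) by ring, abs_neg,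
            abs_of_pos (by nlinarith)]
        constructor
        · rw [e, hD, abs_of_pos (by linarith)]
          linarith
        · rw [e]; intro hcon; linarith
    · -- c odd : q^c = -d^c, |q^c+1| = d^c - 1
      have e : q ^ c = -(d ^ c) := by rw [hq]; exact hc.neg_pow d
      have hdc2 : (2:ℤ) ≤ d ^ c := by
        calc (2:ℤ) = 2 ^ 1 := by norm_num
        _ ≤ 2 ^ c := pow_le_pow_right₀ (by norm_num) hc1
        _ ≤ d ^ c := pow_le_pow_left₀ (by norm_num) hd c
      constructor
      · rw [e, show -(d ^ c) + 1 = -(d ^ c - 1) by ring, abs_neg,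
          abs_of_nonneg (by linarith)]
        linarith
      · rw [e]; intro hcon; linarith
  obtain ⟨hlt, hne⟩ := hlt
  have hdvd : |q ^ n - 1| ∣ |q ^ c + 1| := (abs_dvd _ _).mpr ((dvd_abs _ _).mpr h)
  have := Int.le_of_dvd (abs_pos.mpr hne) hdvd
  linarith

lemma key_aux (d q : ℤ) (hd : 2 ≤ d) (hq : q = -d) (n a b : ℕ) (hn : 1 ≤ n) (hb : b < n)
    (hab : a ≤ b) (h : q ^ n - 1 ∣ q ^ a + q ^ b) : False := by
  have hD : q ^ n - 1 ∣ q ^ n - 1 := dvd_rfl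
  have h1 : q ^ n - 1 ∣ q ^ (n - b + a) + q ^ n := by
    have e : q ^ (n - b + a) + q ^ n = q ^ (n - b) * (q ^ a + q ^ b) := by
      rw [mul_add, ← pow_add, ← pow_add]
      congr 2
      omega
    rw [e]
    exact h.mul_left _
  have h2 : q ^ n - 1 ∣ q ^ (n - b + a) + 1 := by
    have e : q ^ (n - b + a) + 1 = (q ^ (n - b + a) + q ^ n) - (q ^ n - 1) := by ring
    rw [e]
    exact h1.sub hD
  rcases lt_or_eq_of_le hab with hlt | heq
  · exact keyC_aux d q hd hq n (n - b + a) (by omega) (by omega) h2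
  · -- a = b, so n - b + a = n : q^n - 1 ∣ q^n + 1 hence ∣ 2
    subst heq
    have hnn : n - a + a = n := by omega
    rw [hnn] at h2
    have h3 : q ^ n - 1 ∣ 2 := by
      have e : (2:ℤ) = (q ^ n + 1) - (q ^ n - 1) := by ring
      rw [e]
      exact h2.sub hD
    have h4 : |q ^ n - 1| ≤ 2 := Int.le_of_dvd (by norm_num) ((abs_dvd _ _).mpr h3)
    have hd0 : (0:ℤ) ≤ d := by linarith
    rcases Nat.even_or_odd n with hne | hno
    · have e : q ^ n = d ^ n := by rw [hq]; exact hne.neg_pow d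
      obtain ⟨j, hj⟩ := hne
      have h2n : 2 ≤ n := by omega
      have h5 : (4:ℤ) ≤ d ^ n := by
        calc (4:ℤ) = 2 ^ 2 := by norm_num
        _ ≤ 2 ^ n := pow_le_pow_right₀ (by norm_num) h2n
        _ ≤ d ^ n := pow_le_pow_left₀ (by norm_num) hd n
      rw [e, abs_of_pos (by linarith)] at h4
      linarith
    · have e : q ^ n = -(d ^ n) := by rw [hq]; exact hno.neg_pow d
      have h5 : (2:ℤ) ≤ d ^ n := by
        calc (2:ℤ) = 2 ^ 1 := by norm_num
        _ ≤ 2 ^ n := pow_le_pow_right₀ (by norm_num) hn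
        _ ≤ d ^ n := pow_le_pow_left₀ (by norm_num) hd n
      rw [e, show -(d ^ n) - 1 = -(d ^ n + 1) by ring, abs_neg,
        abs_of_pos (by linarith)] at h4
      linarith

/-- for `d ≥ 2`, `q = -d`, any `m₁, m₂ ∈ ℕ` and `n ≥ 1`, the integer `q^n - 1`
does not divide `q^{m₁} + q^{m₂}`. -/
theorem not_dvd_pow_add_pow (d q : ℤ) (hd : 2 ≤ d) (hq : q = -d) (m₁ m₂ n : ℕ) (hn : 1 ≤ n) :
    ¬ (q ^ n - 1 ∣ q ^ m₁ + q ^ m₂) := by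
  intro h
  have hred : ∀ m : ℕ, q ^ n - 1 ∣ q ^ m - q ^ (m % n) := by
    intro m
    have h1 : q ^ m - q ^ (m % n) = ((q ^ n) ^ (m / n) - 1) * q ^ (m % n) := by
      rw [sub_mul, one_mul, ← pow_mul, ← pow_add, Nat.div_add_mod]
    have h2 : q ^ n - 1 ∣ (q ^ n) ^ (m / n) - 1 := by
      simpa using sub_dvd_pow_sub_pow (q ^ n) 1 (m / n)
    rw [h1]
    exact h2.mul_right _
  have hab : q ^ n - 1 ∣ q ^ (m₁ % n) + q ^ (m₂ % n) := by
    have e : q ^ (m₁ % n) + q ^ (m₂ % n) =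
        (q ^ m₁ + q ^ m₂) - (q ^ m₁ - q ^ (m₁ % n)) - (q ^ m₂ - q ^ (m₂ % n)) := by ring
    rw [e]
    exact (h.sub (hred m₁)).sub (hred m₂)
  have hn0 : 0 < n := hn
  rcases le_total (m₁ % n) (m₂ % n) with hle | hle
  · exact key_aux d q hd hq n (m₁ % n) (m₂ % n) hn (Nat.mod_lt _ hn0) hle hab
  · rw [add_comm] at hab
    exact key_aux d q hd hq n (m₂ % n) (m₁ % n) hn (Nat.mod_lt _ hn0) hle hab
end

section
/- Let d ≥ 2 be an integer, q = -d, n ≥ 1, and 0 ≤ m₁, m₂ ≤ n-1. Then ⟨σ^{q^{m₁}+q^{m₂}}⟩_n = 0, ⟨σ^{q^{m₁}}·u₁(σ^{q^{m₂}})⟩_n = 0, and ⟨u₁(σ^{q^{m₁}})·u₁(σ^{q^{m₂}})⟩_n = 0. -/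
open Finset

section IntPart

lemma abs_q_eq (d q : ℤ) (hd : 2 ≤ d) (hq : q = -d) : |q| = d := by
  rw [hq, abs_neg, abs_of_nonneg (by omega)]

lemma key_ineq (d q : ℤ) (hd : 2 ≤ d) (hq : q = -d) {m n : ℕ} (hmn : m < n) :
    |1 + q ^ m| < |q ^ n - 1| := by
  have habs := abs_q_eq d q hd hq
  have h1 : (d : ℤ) ^ n - 1 ≤ |q ^ n - 1| := by
    calc (d:ℤ)^n - 1 = |q^n| - |(1:ℤ)| := by rw [abs_pow, habs, abs_one]
    _ ≤ |q^n - 1| := abs_sub_abs_le_abs_sub _ _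
  have hd1 : (1:ℤ) ≤ d := by omega
  rcases Nat.eq_zero_or_pos m with hm | hm
  · subst hm
    simp only [pow_zero]
    have h2 : |(1:ℤ) + 1| = 2 := by norm_num
    rcases Nat.lt_or_ge n 2 with hn2 | hn2
    · have hn1 : n = 1 := by omega
      subst hn1
      have : |q ^ 1 - 1| = d + 1 := by
        rw [pow_one, hq, abs_of_nonpos (by omega)]
        ring
      omega
    · have hdn : (4:ℤ) ≤ d ^ n := by
        calc (4:ℤ) = 2^2 := by norm_num
        _ ≤ d ^ 2 := pow_le_pow_left₀ (by norm_num) hd 2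
        _ ≤ d ^ n := pow_le_pow_right₀ (by omega) hn2
      omega
  · have hdm : (2:ℤ) ≤ d ^ m := by
      calc (2:ℤ) = 2^1 := by norm_num
      _ ≤ d ^ 1 := by simpa using hd
      _ ≤ d ^ m := pow_le_pow_right₀ (by omega) hm
    have hmul : (d:ℤ) ^ m * d ≤ d ^ n := by
      calc (d:ℤ)^m * d = d ^ (m+1) := (pow_succ d m).symm
      _ ≤ d ^ n := by gcongr <;> omega
    rcases Nat.even_or_odd m with he | ho
    · have hqm : q ^ m = d ^ m := by rw [hq, he.neg_pow]
      have hm2 : 2 ≤ m := by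
        rcases he with ⟨r, hr⟩; omega
      have hd4 : (4:ℤ) ≤ d ^ m := by
        calc (4:ℤ) = 2^2 := by norm_num
        _ ≤ d ^ 2 := pow_le_pow_left₀ (by norm_num) hd 2
        _ ≤ d ^ m := pow_le_pow_right₀ (by omega) hm2
      have h2 : |1 + q ^ m| = 1 + d ^ m := by
        rw [hqm, abs_of_nonneg (by omega)]
      nlinarith
    · have hqm : q ^ m = -(d ^ m) := by rw [hq, ho.neg_pow]
      have h2 : |1 + q ^ m| = d ^ m - 1 := by
        rw [hqm, abs_of_nonpos (by omega)]
        ring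
      nlinarith

lemma q_pm_ne_neg_one (d q : ℤ) (hd : 2 ≤ d) (hq : q = -d) (m : ℕ) : 1 + q ^ m ≠ 0 := by
  intro h
  have habs := abs_q_eq d q hd hq
  have h1 : |q ^ m| = 1 := by
    have : q ^ m = -1 := by omega
    rw [this]; norm_num
  rw [abs_pow, habs] at h1
  rcases Nat.eq_zero_or_pos m with hm | hm
  · subst hm; simp at h
  · have : (2:ℤ) ≤ d ^ m := by
      calc (2:ℤ) = 2^1 := by norm_num
      _ ≤ d ^ 1 := by simpa using hd
      _ ≤ d ^ m := pow_le_pow_right₀ (by omega) hm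
    omega

lemma coprime_q (q : ℤ) (n : ℕ) (hn : 1 ≤ n) : IsCoprime (q ^ n - 1) q := by
  refine ⟨-1, q ^ (n-1), ?_⟩
  have : q ^ (n-1) * q = q ^ n := by
    rw [← pow_succ]
    congr 1
    omega
  linarith [this]

lemma cne (d q : ℤ) (hd : 2 ≤ d) (hq : q = -d) (n : ℕ) (hn : 1 ≤ n) : q ^ n - 1 ≠ 0 := by
  intro h
  have habs := abs_q_eq d q hd hq
  have h1 : |q ^ n| = 1 := by
    have : q ^ n = 1 := by omega
    simp [this]
  rw [abs_pow, habs] at h1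
  have : (2:ℤ) ≤ d ^ n := by
    calc (2:ℤ) = 2^1 := by norm_num
    _ ≤ d ^ 1 := by simpa using hd
    _ ≤ d ^ n := pow_le_pow_right₀ (by omega) hn
  omega

/-- core case : both exponents < n -/
lemma key_dvd_core (d q : ℤ) (hd : 2 ≤ d) (hq : q = -d) (n : ℕ) (hn : 1 ≤ n)
    {a b : ℕ} (hb : b < n) (hab : a ≤ b) :
    ¬ (q ^ n - 1 ∣ q ^ a + q ^ b) := by
  intro h
  have hfac : q ^ a + q ^ b = q ^ a * (1 + q ^ (b - a)) := by
    rw [mul_add, mul_one, ← pow_add]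
    congr 2
    omega
  rw [hfac] at h
  have hcop : IsCoprime (q ^ n - 1) (q ^ a) := (coprime_q q n hn).pow_right
  have h2 : q ^ n - 1 ∣ 1 + q ^ (b - a) := hcop.dvd_of_dvd_mul_left h
  have hne : 1 + q ^ (b - a) ≠ 0 := q_pm_ne_neg_one d q hd hq _
  have hlt : |1 + q ^ (b-a)| < |q ^ n - 1| := key_ineq d q hd hq (by omega)
  have := Int.le_of_dvd (abs_pos.mpr hne) ((abs_dvd _ _).mpr ((dvd_abs _ _).mpr h2))
  omega

lemma mod_reduce (q : ℤ) (n : ℕ) (hn : 1 ≤ n) (a : ℕ) :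
    q ^ n - 1 ∣ q ^ a - q ^ (a % n) := by
  have hexp : q ^ a = q ^ (a % n) * (q ^ n) ^ (a / n) := by
    rw [← pow_mul, ← pow_add]
    congr 1
    exact (Nat.mod_add_div a n).symm
  rw [hexp]
  have h1 : q ^ n - 1 ∣ (q ^ n) ^ (a / n) - 1 := by
    simpa using sub_dvd_pow_sub_pow (q ^ n) 1 (a / n)
  have h2 : q ^ (a % n) * (q ^ n) ^ (a / n) - q ^ (a % n)
      = q ^ (a % n) * ((q ^ n) ^ (a / n) - 1) := by ring
  rw [h2]
  exact Dvd.dvd.mul_left h1 _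

lemma key_dvd (d q : ℤ) (hd : 2 ≤ d) (hq : q = -d) (n : ℕ) (hn : 1 ≤ n)
    (a b : ℕ) : ¬ (q ^ n - 1 ∣ q ^ a + q ^ b) := by
  intro h
  have h1 := mod_reduce q n hn a
  have h2 := mod_reduce q n hn b
  have h3 : q ^ n - 1 ∣ q ^ (a % n) + q ^ (b % n) := by
    have heq : q ^ (a % n) + q ^ (b % n)
        = (q ^ a + q ^ b) - (q ^ a - q ^ (a % n)) - (q ^ b - q ^ (b % n)) := by ring
    rw [heq]
    exact dvd_sub (dvd_sub h h1) h2
  have han : a % n < n := Nat.mod_lt _ (by omega)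
  have hbn : b % n < n := Nat.mod_lt _ (by omega)
  rcases le_total (a % n) (b % n) with hab | hab
  · exact key_dvd_core d q hd hq n hn hbn hab h3
  · rw [add_comm] at h3
    exact key_dvd_core d q hd hq n hn han hab h3

end IntPart

section Analytic
open Complex Real

lemma hcC_eq (q : ℤ) (n : ℕ) : ((q:ℂ)^n - 1) = ((q^n - 1 : ℤ) : ℂ) := by push_cast; ring

lemma hcC0 (d q : ℤ) (hd : 2 ≤ d) (hq : q = -d) (n : ℕ) (hn : 1 ≤ n) :
    ((q:ℂ)^n - 1) ≠ 0 := by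
  rw [hcC_eq]
  exact_mod_cast cne d q hd hq n hn

lemma norm_exp_one (d q : ℤ) (hd : 2 ≤ d) (hq : q = -d) (n : ℕ) (hn : 1 ≤ n)
    (e : ℤ) (j : ℕ) :
    ‖Complex.exp ((e:ℂ) * (2 * (π:ℂ) * I * (j:ℂ) / ((q:ℂ)^n - 1)))‖ = 1 := by
  have hc : (q^n - 1 : ℤ) ≠ 0 := cne d q hd hq n hn
  have hcR : ((q^n - 1 : ℤ) : ℝ) ≠ 0 := Int.cast_ne_zero.mpr hc
  have harg : (e:ℂ) * (2 * (π:ℂ) * I * (j:ℂ) / ((q:ℂ)^n - 1))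
      = (((e * (2 * π * j / ((q^n - 1 : ℤ) : ℝ))) : ℝ) : ℂ) * I := by
    rw [hcC_eq]
    push_cast
    field_simp
  rw [harg, Complex.norm_exp_ofReal_mul_I]

lemma sum_exp_eq_zero (d q : ℤ) (hd : 2 ≤ d) (hq : q = -d) (n : ℕ) (hn : 1 ≤ n)
    {a : ℤ} (ha : ¬ (q^n - 1 ∣ a)) :
    ∑ j ∈ Icc 1 (q^n - 1).natAbs,
      Complex.exp ((a:ℂ) * (2 * (π:ℂ) * I * (j:ℂ) / ((q:ℂ)^n - 1))) = 0 := by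
  have hc : (q^n - 1 : ℤ) ≠ 0 := cne d q hd hq n hn
  have hc0 : ((q:ℂ)^n - 1) ≠ 0 := hcC0 d q hd hq n hn
  have h2pi : (2 : ℂ) * (π:ℂ) * I ≠ 0 := by
    simp [Real.pi_ne_zero, I_ne_zero]
  set N := (q^n - 1).natAbs with hN
  set ξ : ℂ := Complex.exp ((a:ℂ) * (2 * (π:ℂ) * I / ((q:ℂ)^n - 1))) with hξ
  have hterm : ∀ j : ℕ,
      Complex.exp ((a:ℂ) * (2 * (π:ℂ) * I * (j:ℂ) / ((q:ℂ)^n - 1))) = ξ ^ j := by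
    intro j
    rw [hξ, ← Complex.exp_nat_mul]
    congr 1
    ring
  have hξpow : ξ ^ N = 1 := by
    rw [hξ, ← Complex.exp_nat_mul]
    obtain ⟨k, hk⟩ : ∃ k : ℤ, ((N : ℤ) * a) = (q^n - 1) * k := by
      rcases Int.natAbs_eq (q^n - 1) with h | h
      · exact ⟨a, by rw [hN, ← h]⟩
      · exact ⟨-a, by rw [hN]; linear_combination a * h⟩
    have hkC : ((N:ℂ) * (a:ℂ)) = ((q:ℂ)^n - 1) * (k:ℂ) := by
      rw [hcC_eq]
      exact_mod_cast congrArg (Int.cast : ℤ → ℂ) hk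
    have harg : (N:ℂ) * ((a:ℂ) * (2 * (π:ℂ) * I / ((q:ℂ)^n - 1)))
        = (k:ℂ) * (2 * (π:ℂ) * I) := by
      field_simp
      linear_combination hkC
    rw [harg]
    exact Complex.exp_int_mul_two_pi_mul_I k
  have hξne : ξ ≠ 1 := by
    intro h1
    rw [hξ, Complex.exp_eq_one_iff] at h1
    obtain ⟨k, hk⟩ := h1
    apply ha ⟨k, ?_⟩
    have hC : (a : ℂ) = ((q^n - 1 : ℤ) : ℂ) * (k:ℂ) := by
      rw [← hcC_eq]
      have h3 : (a:ℂ) * (2 * (π:ℂ) * I) = ((q:ℂ)^n - 1) * (k:ℂ) * (2 * (π:ℂ) * I) := by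
        field_simp at hk
        linear_combination (2 * (π:ℂ) * I) * hk
      exact mul_right_cancel₀ h2pi h3
    exact_mod_cast hC
  calc ∑ j ∈ Icc 1 N,
      Complex.exp ((a:ℂ) * (2 * (π:ℂ) * I * (j:ℂ) / ((q:ℂ)^n - 1)))
      = ∑ j ∈ Icc 1 N, ξ ^ j := Finset.sum_congr rfl (fun j _ => hterm j)
    _ = ∑ j ∈ Finset.range N, ξ ^ (1 + j) := by
        rw [← Finset.Ico_add_one_right_eq_Icc, Finset.sum_Ico_eq_sum_range]
        simp
    _ = ξ * ∑ j ∈ Finset.range N, ξ ^ j := by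
        rw [Finset.mul_sum]
        exact Finset.sum_congr rfl (fun j _ => by rw [pow_add, pow_one])
    _ = ξ * ((ξ ^ N - 1) / (ξ - 1)) := by rw [geom_sum_eq hξne]
    _ = 0 := by rw [hξpow]; simp

end Analytic

section Main
open Complex Real

lemma norm_q_pow (d q : ℤ) (hd : 2 ≤ d) (hq : q = -d) (k : ℕ) :
    ‖(q:ℂ)^k‖ = (d:ℝ)^k := by
  rw [norm_pow]
  congr 1
  have h1 : ((q:ℝ):ℂ) = (q:ℂ) := by norm_cast
  rw [← h1, Complex.norm_real, Real.norm_eq_abs, ← Int.cast_abs, abs_q_eq d q hd hq]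

lemma summable_norm_div (d q : ℤ) (hd : 2 ≤ d) (hq : q = -d)
    (f : ℕ → ℂ) (hf : ∀ k, ‖f k‖ = 1) :
    Summable (fun k => ‖f k / (q:ℂ)^k‖) := by
  apply Summable.of_nonneg_of_le (fun k => norm_nonneg _) ?_
    (summable_geometric_of_lt_one (r := 1/2) (by norm_num) (by norm_num))
  intro k
  rw [norm_div, hf, norm_q_pow d q hd hq]
  rw [div_pow, one_pow]
  have h2d : (2:ℝ)^k ≤ (d:ℝ)^k := pow_le_pow_left₀ (by norm_num) (by exact_mod_cast hd) k
  have : (0:ℝ) < 2^k := by positivity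
  exact one_div_le_one_div_of_le this h2d

lemma summable_div (d q : ℤ) (hd : 2 ≤ d) (hq : q = -d)
    (f : ℕ → ℂ) (hf : ∀ k, ‖f k‖ = 1) :
    Summable (fun k => f k / (q:ℂ)^k) :=
  (summable_norm_div d q hd hq f hf).of_norm

end Main

/-- The average `⟨G⟩_n = (1/N)·∑_{j=1}^N G(σ_j)` with `N = |q^n - 1|` and
`σ_j = exp(2πi·j/(q^n-1))`. -/
noncomputable def avg (q : ℤ) (n : ℕ) (G : ℂ → ℂ) : ℂ :=
  (1 / ((q ^ n - 1).natAbs : ℂ)) *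
    ∑ j ∈ Finset.Icc 1 (q ^ n - 1).natAbs,
      G (Complex.exp (2 * Real.pi * Complex.I * (j : ℂ) / ((q : ℂ) ^ n - 1)))

/-- `u₁(z) = ∑_{k=0}^∞ z^{q^k}/q^k`. -/
noncomputable def u1 (q : ℤ) (z : ℂ) : ℂ := ∑' k : ℕ, z ^ (q ^ k) / (q : ℂ) ^ k

section MainThm
open Complex Real Finset

/-- for `d ≥ 2`, `q = -d`, `n ≥ 1` and `0 ≤ m₁, m₂ ≤ n-1`, one has
`⟨σ^{q^{m₁}+q^{m₂}}⟩_n = 0`, `⟨σ^{q^{m₁}}·u₁(σ^{q^{m₂}})⟩_n = 0` and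
`⟨u₁(σ^{q^{m₁}})·u₁(σ^{q^{m₂}})⟩_n = 0`. -/
theorem avg_mixed_eq_zero (d q : ℤ) (hd : 2 ≤ d) (hq : q = -d)
    (n : ℕ) (hn : 1 ≤ n) (m₁ m₂ : ℕ) (hm₁ : m₁ ≤ n - 1) (hm₂ : m₂ ≤ n - 1) :
    avg q n (fun σ => σ ^ (q ^ m₁ + q ^ m₂)) = 0 ∧
    avg q n (fun σ => σ ^ (q ^ m₁) * u1 q (σ ^ (q ^ m₂))) = 0 ∧
    avg q n (fun σ => u1 q (σ ^ (q ^ m₁)) * u1 q (σ ^ (q ^ m₂))) = 0 := by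
  have hS : ∀ e : ℤ, ¬ (q ^ n - 1 ∣ e) →
      ∑ j ∈ Finset.Icc 1 (q ^ n - 1).natAbs,
        Complex.exp ((e:ℂ) * (2 * (π:ℂ) * I * (j:ℂ) / ((q:ℂ)^n - 1))) = 0 :=
    fun e he => sum_exp_eq_zero d q hd hq n hn he
  have hE1 : ∀ (e : ℤ) (j : ℕ),
      ‖Complex.exp ((e:ℂ) * (2 * (π:ℂ) * I * (j:ℂ) / ((q:ℂ)^n - 1)))‖ = 1 := by
    intro e j
    exact norm_exp_one d q hd hq n hn e j
  -- summability of the u1-type series at σ_j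
  have hns : ∀ (j m : ℕ), Summable (fun k : ℕ =>
      ‖Complex.exp (((q ^ (m + k) : ℤ):ℂ) * (2 * (π:ℂ) * I * (j:ℂ) / ((q:ℂ)^n - 1)))
        / (q:ℂ)^k‖) := by
    intro j m
    exact summable_norm_div d q hd hq _ (fun k => hE1 _ j)
  -- the per-point expansion of `u1`
  have hu : ∀ (j m : ℕ),
      u1 q (Complex.exp (2 * (π:ℂ) * I * (j:ℂ) / ((q:ℂ)^n - 1)) ^ (q ^ m : ℤ))
      = ∑' k : ℕ, Complex.exp (((q ^ (m + k) : ℤ):ℂ)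
          * (2 * (π:ℂ) * I * (j:ℂ) / ((q:ℂ)^n - 1))) / (q:ℂ)^k := by
    intro j m
    rw [← Complex.exp_int_mul _ (q ^ m), u1]
    refine tsum_congr fun k => ?_
    rw [← Complex.exp_int_mul _ (q ^ k)]
    congr 2
    push_cast
    ring
  refine ⟨?_, ?_, ?_⟩
  · simp only [avg]
    rw [Finset.sum_congr rfl
      (fun j _ => (Complex.exp_int_mul _ (q ^ m₁ + q ^ m₂)).symm)]
    rw [hS _ (key_dvd d q hd hq n hn m₁ m₂), mul_zero]
  · simp only [avg]
    have hpt : ∀ j ∈ Finset.Icc 1 (q ^ n - 1).natAbs,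
        Complex.exp (2 * (π:ℂ) * I * (j:ℂ) / ((q:ℂ)^n - 1)) ^ (q ^ m₁ : ℤ) *
          u1 q (Complex.exp (2 * (π:ℂ) * I * (j:ℂ) / ((q:ℂ)^n - 1)) ^ (q ^ m₂ : ℤ))
        = ∑' k : ℕ, Complex.exp (((q ^ m₁ + q ^ (m₂ + k) : ℤ):ℂ)
            * (2 * (π:ℂ) * I * (j:ℂ) / ((q:ℂ)^n - 1))) / (q:ℂ)^k := by
      intro j _
      rw [hu j m₂, ← Complex.exp_int_mul _ (q ^ m₁), ← tsum_mul_left]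
      refine tsum_congr fun k => ?_
      rw [← mul_div_assoc, ← Complex.exp_add]
      congr 2
      push_cast
      ring
    rw [Finset.sum_congr rfl hpt]
    have hsumm : ∀ j ∈ Finset.Icc 1 (q ^ n - 1).natAbs,
        Summable (fun k : ℕ => Complex.exp (((q ^ m₁ + q ^ (m₂ + k) : ℤ):ℂ)
            * (2 * (π:ℂ) * I * (j:ℂ) / ((q:ℂ)^n - 1))) / (q:ℂ)^k) :=
      fun j _ => summable_div d q hd hq _ (fun k => hE1 _ j)
    rw [← Summable.tsum_finsetSum hsumm]
    have hz : ∀ k : ℕ, ∑ j ∈ Finset.Icc 1 (q ^ n - 1).natAbs,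
        Complex.exp (((q ^ m₁ + q ^ (m₂ + k) : ℤ):ℂ)
            * (2 * (π:ℂ) * I * (j:ℂ) / ((q:ℂ)^n - 1))) / (q:ℂ)^k = 0 := by
      intro k
      rw [← Finset.sum_div, hS _ (key_dvd d q hd hq n hn m₁ (m₂ + k)), zero_div]
    rw [(tsum_congr hz).trans tsum_zero, mul_zero]
  · simp only [avg]
    have hpt : ∀ j ∈ Finset.Icc 1 (q ^ n - 1).natAbs,
        u1 q (Complex.exp (2 * (π:ℂ) * I * (j:ℂ) / ((q:ℂ)^n - 1)) ^ (q ^ m₁ : ℤ)) *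
          u1 q (Complex.exp (2 * (π:ℂ) * I * (j:ℂ) / ((q:ℂ)^n - 1)) ^ (q ^ m₂ : ℤ))
        = ∑' p : ℕ × ℕ, Complex.exp (((q ^ (m₁ + p.1) + q ^ (m₂ + p.2) : ℤ):ℂ)
            * (2 * (π:ℂ) * I * (j:ℂ) / ((q:ℂ)^n - 1))) / (q:ℂ)^(p.1 + p.2) := by
      intro j _
      rw [hu j m₁, hu j m₂, tsum_mul_tsum_of_summable_norm (hns j m₁) (hns j m₂)]
      refine tsum_congr fun p => ?_
      rw [div_mul_div_comm, ← Complex.exp_add, ← pow_add]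
      congr 2
      push_cast
      ring
    rw [Finset.sum_congr rfl hpt]
    have hsumm : ∀ j ∈ Finset.Icc 1 (q ^ n - 1).natAbs,
        Summable (fun p : ℕ × ℕ => Complex.exp (((q ^ (m₁ + p.1) + q ^ (m₂ + p.2) : ℤ):ℂ)
            * (2 * (π:ℂ) * I * (j:ℂ) / ((q:ℂ)^n - 1))) / (q:ℂ)^(p.1 + p.2)) := by
      intro j _
      refine Summable.congr (summable_mul_of_summable_norm (hns j m₁) (hns j m₂)) ?_
      intro p
      rw [div_mul_div_comm, ← Complex.exp_add, ← pow_add]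
      congr 2
      push_cast
      ring
    rw [← Summable.tsum_finsetSum hsumm]
    have hz : ∀ p : ℕ × ℕ, ∑ j ∈ Finset.Icc 1 (q ^ n - 1).natAbs,
        Complex.exp (((q ^ (m₁ + p.1) + q ^ (m₂ + p.2) : ℤ):ℂ)
            * (2 * (π:ℂ) * I * (j:ℂ) / ((q:ℂ)^n - 1))) / (q:ℂ)^(p.1 + p.2) = 0 := by
      intro p
      rw [← Finset.sum_div, hS _ (key_dvd d q hd hq n hn (m₁ + p.1) (m₂ + p.2)), zero_div]
    rw [(tsum_congr hz).trans tsum_zero, mul_zero]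


end MainThm
end
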